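/- arXiv:2004.11856 — 2 statements merged into one kernel-verified Lean document; each statement's English description precedes it below -/
import Mathlib

section
/- Positive semidefiniteness propagation in the Riccati recursion: If Q is positive semidefinite, R is positive definite, and S is symmetric positive semidefinite, then R(S) := Q + AᵀSA − AᵀSB(R + BᵀSB)⁻¹BᵀSA is symmetric positive semidefinite, and R + BᵀSB is symmetric positive definite. -/
open Matrix

lemma psd_fromBlocks_diag {n m : ℕ} {Q : Matrix (Fin n) (Fin n) ℝ}
    {R : Matrix (Fin m) (Fin m) ℝ} (hQ : Q.PosSemidef) (hR : R.PosSemidef) :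
    (fromBlocks Q 0 0 R).PosSemidef := by
  refine PosSemidef.of_dotProduct_mulVec_nonneg ?_ ?_
  · rw [isHermitian_fromBlocks_iff]
    exact ⟨hQ.1, by simp, by simp, hR.1⟩
  · intro x
    have h1 := hQ.dotProduct_mulVec_nonneg (x ∘ Sum.inl)
    have h2 := hR.dotProduct_mulVec_nonneg (x ∘ Sum.inr)
    have hstar : star x = Sum.elim (star (x ∘ Sum.inl)) (star (x ∘ Sum.inr)) := by
      ext (i | i) <;> rfl
    rw [fromBlocks_mulVec]
    simp only [zero_mulVec, add_zero, zero_add]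
    rw [hstar, sumElim_dotProduct_sumElim]
    exact add_nonneg h1 h2

/-- Positive semidefiniteness propagation in the Riccati recursion. -/
theorem stmt_12 {n m : ℕ}
    (A : Matrix (Fin n) (Fin n) ℝ) (B : Matrix (Fin n) (Fin m) ℝ)
    (Q : Matrix (Fin n) (Fin n) ℝ) (R : Matrix (Fin m) (Fin m) ℝ)
    (S : Matrix (Fin n) (Fin n) ℝ)
    (hQ : Q.PosSemidef) (hR : R.PosDef) (hS : S.PosSemidef) :
    (Q + Aᵀ * S * A - Aᵀ * S * B * (R + Bᵀ * S * B)⁻¹ * (Bᵀ * S * A)).PosSemidef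
      ∧ (R + Bᵀ * S * B).PosDef := by
  have hBSB : (Bᵀ * S * B).PosSemidef := by
    simpa using hS.conjTranspose_mul_mul_same B
  have hM : (R + Bᵀ * S * B).PosDef := hR.add_posSemidef hBSB
  refine ⟨?_, hM⟩
  haveI : Invertible (R + Bᵀ * S * B) := hM.isUnit.invertible
  have hL : ((fromCols A B)ᴴ * S * fromCols A B).PosSemidef :=
    hS.conjTranspose_mul_mul_same (fromCols A B)
  have hLe : (fromCols A B)ᴴ * S * fromCols A B =
      fromBlocks (Aᵀ * S * A) (Aᵀ * S * B) (Bᵀ * S * A) (Bᵀ * S * B) := by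
    rw [conjTranspose_fromCols_eq_fromRows_conjTranspose, Matrix.mul_assoc,
      mul_fromCols, fromRows_mul_fromCols]
    simp [Matrix.mul_assoc]
  have hbig : (fromBlocks (Q + Aᵀ * S * A) (Aᵀ * S * B) (Bᵀ * S * A)
      (R + Bᵀ * S * B)).PosSemidef := by
    have := (psd_fromBlocks_diag hQ hR.posSemidef).add (hLe ▸ hL)
    simpa [fromBlocks_add] using this
  have hST : Sᵀ = S := hS.1
  have hconj : (Aᵀ * S * B)ᴴ = Bᵀ * S * A := by
    show (Aᵀ * S * B)ᵀ = Bᵀ * S * A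
    simp [transpose_mul, Matrix.mul_assoc, hST]
  rw [show Bᵀ * S * A = (Aᵀ * S * B)ᴴ from hconj.symm] at hbig ⊢
  exact (PosDef.fromBlocks₂₂ (Q + Aᵀ * S * A) (Aᵀ * S * B) hM).mp hbig
end

section
/- Conditional independence of control-free stochastic states: Consider processes x₀ˢ(t+1) = A₀₀ x₀ˢ(t) + w₀(t), xᵢˢ(t+1) = Aᵢᵢ xᵢˢ(t) + Aᵢ₀ x₀ˢ(t) + wᵢ(t) for i ∈ {1,…,n}, where the initial states x₀ˢ(1), …, xₙˢ(1) and all noises {wᵢ(τ)} are mutually independent. Then for any t and any i ≠ j in {1,…,n}, the trajectories xᵢˢ(1:t) and xⱼˢ(1:t) are conditionally independent given x₀ˢ(1:t). -/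
open MeasureTheory ProbabilityTheory Matrix

/-- Index type for the primitive random variables: initial states (left) and
noise vectors (right). -/
def primIdxType {n : ℕ} (d : Fin (n + 1) → ℕ) :
    Fin (n + 1) ⊕ (Fin (n + 1) × ℕ) → Type
  | Sum.inl i => Fin (d i) → ℝ
  | Sum.inr p => Fin (d p.1) → ℝ

instance {n : ℕ} (d : Fin (n + 1) → ℕ) (j : Fin (n + 1) ⊕ (Fin (n + 1) × ℕ)) :
    MeasurableSpace (primIdxType d j) :=
  match j with
  | Sum.inl i => inferInstanceAs (MeasurableSpace (Fin (d i) → ℝ))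
  | Sum.inr p => inferInstanceAs (MeasurableSpace (Fin (d p.1) → ℝ))

lemma aux_condexp {Ω : Type*} {mE m' : MeasurableSpace Ω}
    {mΩ : MeasurableSpace Ω} [StandardBorelSpace Ω]
    {μ : Measure Ω} [IsProbabilityMeasure μ]
    (hE : mE ≤ mΩ) (hm' : m' ≤ mΩ)
    (hind : Indep mE m' μ) {e c : Set Ω} (he : MeasurableSet[mE] e)
    (hc : MeasurableSet[m'] c) :
    (μ⟦e ∩ c | m'⟧) =ᵐ[μ] fun ω => (μ e).toReal * c.indicator (fun _ => (1:ℝ)) ω := by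
  have hint : Integrable (e.indicator (fun _ => (1:ℝ))) μ :=
    (integrable_const (μ := μ) 1).indicator (hE _ he)
  have h1 : μ[e.indicator (fun _ => (1:ℝ)) | m'] =ᵐ[μ] fun _ => (μ e).toReal := by
    have hsm : StronglyMeasurable[mE] (e.indicator (fun _ => (1:ℝ))) :=
      StronglyMeasurable.indicator stronglyMeasurable_const he
    have h := condExp_indep_eq hE hm' hsm hind
    refine h.trans ?_
    have : ∫ ω, e.indicator (fun _ => (1:ℝ)) ω ∂μ = (μ e).toReal := by
      rw [integral_indicator_const (μ := μ) _ (hE _ he)]; simp [Measure.real]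
    rw [this]
  have h2 : (e ∩ c).indicator (fun _ => (1:ℝ)) = c.indicator (e.indicator fun _ => (1:ℝ)) := by
    rw [Set.indicator_indicator, Set.inter_comm]
  calc μ⟦e ∩ c | m'⟧ = μ[c.indicator (e.indicator fun _ => (1:ℝ)) | m'] := by rw [h2]
    _ =ᵐ[μ] c.indicator (μ[e.indicator (fun _ => (1:ℝ)) | m']) := condExp_indicator hint hc
    _ =ᵐ[μ] fun ω => (μ e).toReal * c.indicator (fun _ => (1:ℝ)) ω := by
        filter_upwards [h1] with ω hω
        by_cases hωc : ω ∈ c <;>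
          simp [hωc, Set.indicator_of_mem, Set.indicator_of_notMem, hω]

lemma aux_condIndep {Ω : Type*} {mU mV m' : MeasurableSpace Ω}
    {mΩ : MeasurableSpace Ω} [StandardBorelSpace Ω]
    {μ : Measure Ω} [IsProbabilityMeasure μ]
    (hU : mU ≤ mΩ) (hV : mV ≤ mΩ) (hm' : m' ≤ mΩ)
    (h1 : Indep mU mV μ) (h2 : Indep (mU ⊔ mV) m' μ) :
    CondIndep m' (mU ⊔ m') (mV ⊔ m') hm' μ := by
  have hUV : mU ⊔ mV ≤ mΩ := sup_le hU hV
  set p1 : Set (Set Ω) :=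
    {s | ∃ a c, MeasurableSet[mU] a ∧ MeasurableSet[m'] c ∧ s = a ∩ c} with hp1def
  set p2 : Set (Set Ω) :=
    {s | ∃ b c, MeasurableSet[mV] b ∧ MeasurableSet[m'] c ∧ s = b ∩ c} with hp2def
  have hgen : ∀ (mW : MeasurableSpace Ω), mW ≤ mΩ →
      mW ⊔ m' = MeasurableSpace.generateFrom
        {s | ∃ a c, MeasurableSet[mW] a ∧ MeasurableSet[m'] c ∧ s = a ∩ c} := by
    intro mW hW
    refine le_antisymm (sup_le ?_ ?_) (MeasurableSpace.generateFrom_le ?_)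
    · intro s hs
      exact MeasurableSpace.measurableSet_generateFrom
        ⟨s, Set.univ, hs, MeasurableSet.univ, (Set.inter_univ s).symm⟩
    · intro s hs
      exact MeasurableSpace.measurableSet_generateFrom
        ⟨Set.univ, s, MeasurableSet.univ, hs, (Set.univ_inter s).symm⟩
    · rintro s ⟨a, c, ha, hc, rfl⟩
      exact ((le_sup_left : mW ≤ mW ⊔ m') a ha).inter ((le_sup_right : m' ≤ mW ⊔ m') c hc)
  have hpi : ∀ (mW : MeasurableSpace Ω), IsPiSystem
      {s | ∃ a c, MeasurableSet[mW] a ∧ MeasurableSet[m'] c ∧ s = a ∩ c} := by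
    rintro mW s ⟨a, c, ha, hc, rfl⟩ u ⟨b, c', hb, hc', rfl⟩ _
    exact ⟨a ∩ b, c ∩ c', ha.inter hb, hc.inter hc',
      Set.inter_inter_inter_comm a c b c'⟩
  refine CondIndepSets.condIndep (sup_le hU hm') (sup_le hV hm')
    (hpi mU) (hpi mV) (hgen mU hU) (hgen mV hV) ?_
  rw [condIndepSets_iff]
  rotate_left
  · rintro s ⟨a, c, ha, hc, rfl⟩; exact (hU a ha).inter (hm' c hc)
  · rintro s ⟨b, c, hb, hc, rfl⟩; exact (hV b hb).inter (hm' c hc)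
  rintro s u ⟨a, c, ha, hc, rfl⟩ ⟨b, c', hb, hc', rfl⟩
  have hab : MeasurableSet[mU ⊔ mV] (a ∩ b) :=
    ((le_sup_left : mU ≤ mU ⊔ mV) a ha).inter ((le_sup_right : mV ≤ mU ⊔ mV) b hb)
  have hL := aux_condexp hUV hm' h2 hab (hc.inter hc')
  have hA := aux_condexp hUV hm' h2 ((le_sup_left : mU ≤ mU ⊔ mV) a ha) hc
  have hB := aux_condexp hUV hm' h2 ((le_sup_right : mV ≤ mU ⊔ mV) b hb) hc'
  have hset : (a ∩ c) ∩ (b ∩ c') = (a ∩ b) ∩ (c ∩ c') := Set.inter_inter_inter_comm a c b c'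
  rw [hset]
  refine hL.trans ?_
  have hmul : μ (a ∩ b) = μ a * μ b := by
    rw [Indep_iff] at h1; exact h1 a b ha hb
  filter_upwards [hA, hB] with ω hAω hBω
  rw [Pi.mul_apply, hAω, hBω, hmul, ENNReal.toReal_mul]
  by_cases h1ω : ω ∈ c <;> by_cases h2ω : ω ∈ c' <;>
    simp [h1ω, h2ω, Set.indicator_of_mem, Set.indicator_of_notMem]

lemma aux_iIndep_mono {Ω ι : Type*} {mΩ : MeasurableSpace Ω} {μ : Measure Ω}
    {m m' : ι → MeasurableSpace Ω} (h : ∀ i, m' i ≤ m i) (hm : iIndep m μ) :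
    iIndep m' μ := by
  rw [iIndep_iff] at hm ⊢
  exact fun s f hf => hm s (fun i hi => h i _ (hf i hi))


/-- Conditional independence of the control-free stochastic states of two
distinct minor agents given the trajectory of the major agent's state. -/
theorem stmt_17 {Ω : Type*} {mΩ : MeasurableSpace Ω} [StandardBorelSpace Ω]
    {μ : Measure Ω} [IsProbabilityMeasure μ]
    {n : ℕ} (d : Fin (n + 1) → ℕ)
    (xs : (i : Fin (n + 1)) → ℕ → Ω → (Fin (d i) → ℝ))
    (ws : (i : Fin (n + 1)) → ℕ → Ω → (Fin (d i) → ℝ))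
    (hmeas : ∀ i τ, Measurable (xs i τ))
    (A00 : Matrix (Fin (d 0)) (Fin (d 0)) ℝ)
    (Aii : (i : Fin (n + 1)) → Matrix (Fin (d i)) (Fin (d i)) ℝ)
    (Ai0 : (i : Fin (n + 1)) → Matrix (Fin (d i)) (Fin (d 0)) ℝ)
    (hrec0 : ∀ τ : ℕ, 1 ≤ τ →
      xs 0 (τ + 1) = fun ω => A00.mulVec (xs 0 τ ω) + ws 0 τ ω)
    (hreci : ∀ i : Fin (n + 1), i ≠ 0 → ∀ τ : ℕ, 1 ≤ τ →
      xs i (τ + 1) = fun ω =>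
        (Aii i).mulVec (xs i τ ω) + (Ai0 i).mulVec (xs 0 τ ω) + ws i τ ω)
    (hindep : iIndepFun (β := primIdxType d) (m := fun j => inferInstance)
      (fun j : Fin (n + 1) ⊕ (Fin (n + 1) × ℕ) =>
        match j with
        | Sum.inl i => xs i 1
        | Sum.inr p => ws p.1 p.2) μ)
    (t : ℕ)
    (hm : MeasurableSpace.comap
        (fun ω => fun τ : Fin t => xs 0 ((τ : ℕ) + 1) ω) inferInstance ≤ mΩ) :
    ∀ i j : Fin (n + 1), i ≠ 0 → j ≠ 0 → i ≠ j →
      CondIndepFun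
        (MeasurableSpace.comap
          (fun ω => fun τ : Fin t => xs 0 ((τ : ℕ) + 1) ω) inferInstance) hm
        (fun ω => fun τ : Fin t => xs i ((τ : ℕ) + 1) ω)
        (fun ω => fun τ : Fin t => xs j ((τ : ℕ) + 1) ω) μ := by
  intro i j hi hj hij
  -- matrix-vector multiplication is measurable
  have hmul : ∀ {p q : ℕ} (A : Matrix (Fin p) (Fin q) ℝ),
      Measurable (fun v : Fin q → ℝ => A.mulVec v) := by
    intro p q A
    apply measurable_pi_lambda
    intro k
    simp only [Matrix.mulVec, dotProduct]
    exact Finset.measurable_sum _ (fun l _ => (measurable_pi_apply l).const_mul _)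
  -- measurability of the used noises
  have hwmeas : ∀ (i0 : Fin (n + 1)) (τ : ℕ), 1 ≤ τ → Measurable (ws i0 τ) := by
    intro i0 τ hτ
    by_cases h0 : i0 = 0
    · subst h0
      have hw : ws 0 τ = fun ω => xs 0 (τ + 1) ω - A00.mulVec (xs 0 τ ω) := by
        funext ω
        have h := congrFun (hrec0 τ hτ) ω
        rw [h]; abel
      rw [hw]
      exact (hmeas 0 (τ + 1)).sub ((hmul A00).comp (hmeas 0 τ))
    · have hw : ws i0 τ = fun ω => xs i0 (τ + 1) ω -
          ((Aii i0).mulVec (xs i0 τ ω) + (Ai0 i0).mulVec (xs 0 τ ω)) := by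
        funext ω
        have h := congrFun (hreci i0 h0 τ hτ) ω
        rw [h]; abel
      rw [hw]
      exact (hmeas i0 (τ + 1)).sub
        (((hmul (Aii i0)).comp (hmeas i0 τ)).add ((hmul (Ai0 i0)).comp (hmeas 0 τ)))
  -- the family of σ-algebras generated by the primitive random variables
  set m : (Fin (n + 1) ⊕ (Fin (n + 1) × ℕ)) → MeasurableSpace Ω := fun k =>
    match k with
    | Sum.inl i2 => MeasurableSpace.comap (xs i2 1) inferInstance
    | Sum.inr p => if 1 ≤ p.2 then MeasurableSpace.comap (ws p.1 p.2) inferInstance else ⊥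
    with hmdef
  have hiIndep : iIndep m μ := by
    refine aux_iIndep_mono ?_ ((iIndepFun_iff_iIndep _ _ _).mp hindep)
    intro k
    match k with
    | Sum.inl i2 => exact le_rfl
    | Sum.inr p =>
      by_cases hp : 1 ≤ p.2
      · simp only [hmdef, hp, if_true]; exact le_rfl
      · simp only [hmdef, hp, if_false]; exact bot_le
  have h_le : ∀ k, m k ≤ mΩ := by
    intro k
    match k with
    | Sum.inl i2 => exact (hmeas i2 1).comap_le
    | Sum.inr p =>
      by_cases hp : 1 ≤ p.2
      · simp only [hmdef, hp, if_true]; exact (hwmeas p.1 p.2 hp).comap_le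
      · simp only [hmdef, hp, if_false]; exact bot_le
  -- grouping
  set grp : (Fin (n + 1) ⊕ (Fin (n + 1) × ℕ)) → Fin (n + 1) := Sum.elim id Prod.fst with hgrp
  set M : Fin (n + 1) → MeasurableSpace Ω :=
    fun i0 => ⨆ k ∈ grp ⁻¹' {i0}, m k with hMdef
  have hM_le : ∀ i0, M i0 ≤ mΩ := fun i0 => iSup₂_le fun k _ => h_le k
  have hMx : ∀ i0 : Fin (n + 1), MeasurableSpace.comap (xs i0 1) inferInstance ≤ M i0 := by
    intro i0
    have h1 : m (Sum.inl i0) ≤ M i0 :=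
      le_biSup m (by simp [hgrp] : Sum.inl i0 ∈ grp ⁻¹' {i0})
    exact h1
  have hMw : ∀ (i0 : Fin (n + 1)) (τ : ℕ), 1 ≤ τ →
      MeasurableSpace.comap (ws i0 τ) inferInstance ≤ M i0 := by
    intro i0 τ hτ
    have h1 : m (Sum.inr (i0, τ)) ≤ M i0 :=
      le_biSup m (by simp [hgrp] : Sum.inr (i0, τ) ∈ grp ⁻¹' {i0})
    simpa only [hmdef, if_pos hτ] using h1
  -- major state measurable w.r.t. M 0
  have h0 : ∀ τ : ℕ, Measurable[M 0] (xs 0 (τ + 1)) := by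
    intro τ
    induction τ with
    | zero => exact Measurable.of_comap_le (hMx 0)
    | succ τ ih =>
      rw [hrec0 (τ + 1) (Nat.succ_le_succ (Nat.zero_le τ))]
      exact ((hmul A00).comp ih).add
        (Measurable.of_comap_le (hMw 0 (τ + 1) (Nat.succ_le_succ (Nat.zero_le τ))))
  set Y : Ω → (Fin t → (Fin (d 0) → ℝ)) := fun ω => fun τ : Fin t => xs 0 ((τ : ℕ) + 1) ω
    with hYdef
  have hm'le : MeasurableSpace.comap Y inferInstance ≤ M 0 := by
    letI : MeasurableSpace Ω := M 0
    exact Measurable.comap_le (measurable_pi_lambda Y (fun τ => h0 τ))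
  -- components of Y are measurable w.r.t. the σ-algebra generated by Y
  have hYc : ∀ τ : ℕ, τ < t →
      Measurable[MeasurableSpace.comap Y inferInstance] (xs 0 (τ + 1)) := by
    intro τ hτ
    letI : MeasurableSpace Ω := MeasurableSpace.comap Y inferInstance
    have hYmeas : Measurable[MeasurableSpace.comap Y inferInstance] Y :=
      Measurable.of_comap_le le_rfl
    exact (measurable_pi_apply (X := fun _ : Fin t => Fin (d 0) → ℝ)
      (⟨τ, hτ⟩ : Fin t)).comp hYmeas
  -- minor trajectories
  have hminor : ∀ (i0 : Fin (n + 1)), i0 ≠ 0 → ∀ τ : ℕ, τ + 1 ≤ t →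
      Measurable[M i0 ⊔ MeasurableSpace.comap Y inferInstance] (xs i0 (τ + 1)) := by
    intro i0 hi0 τ
    induction τ with
    | zero => exact fun _ => Measurable.of_comap_le ((hMx i0).trans le_sup_left)
    | succ τ ih =>
      intro hτ
      rw [hreci i0 hi0 (τ + 1) (Nat.succ_le_succ (Nat.zero_le τ))]
      have h1 : Measurable[M i0 ⊔ MeasurableSpace.comap Y inferInstance] (xs i0 (τ + 1)) :=
        ih (by omega)
      have h2 : Measurable[M i0 ⊔ MeasurableSpace.comap Y inferInstance] (xs 0 (τ + 1)) :=
        (hYc τ (by omega)).mono le_sup_right le_rfl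
      have h3 : Measurable[M i0 ⊔ MeasurableSpace.comap Y inferInstance] (ws i0 (τ + 1)) :=
        Measurable.of_comap_le ((hMw i0 (τ + 1) (Nat.succ_le_succ (Nat.zero_le τ))).trans
          le_sup_left)
      exact (((hmul (Aii i0)).comp h1).add ((hmul (Ai0 i0)).comp h2)).add h3
  have hf : MeasurableSpace.comap (fun ω => fun τ : Fin t => xs i ((τ : ℕ) + 1) ω)
      inferInstance ≤ M i ⊔ MeasurableSpace.comap Y inferInstance := by
    letI : MeasurableSpace Ω := M i ⊔ MeasurableSpace.comap Y inferInstance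
    exact Measurable.comap_le (measurable_pi_lambda (fun ω => fun τ : Fin t => xs i ((τ : ℕ) + 1) ω) (fun τ => hminor i hi τ τ.2))
  have hg : MeasurableSpace.comap (fun ω => fun τ : Fin t => xs j ((τ : ℕ) + 1) ω)
      inferInstance ≤ M j ⊔ MeasurableSpace.comap Y inferInstance := by
    letI : MeasurableSpace Ω := M j ⊔ MeasurableSpace.comap Y inferInstance
    exact Measurable.comap_le (measurable_pi_lambda (fun ω => fun τ : Fin t => xs j ((τ : ℕ) + 1) ω) (fun τ => hminor j hj τ τ.2))
  -- independence of the groups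
  have hdisj : ∀ (a b : Fin (n + 1)), a ≠ b → Disjoint (grp ⁻¹' {a}) (grp ⁻¹' {b}) :=
    fun a b hab => (Set.disjoint_singleton.mpr hab).preimage grp
  have hIndep1 : Indep (M i) (M j) μ :=
    indep_iSup_of_disjoint h_le hiIndep (hdisj i j hij)
  have hIndep2' : Indep (M i ⊔ M j) (M 0) μ := by
    have h := indep_iSup_of_disjoint h_le hiIndep
      (S := grp ⁻¹' {i} ∪ grp ⁻¹' {j}) (T := grp ⁻¹' {0})
      (Set.disjoint_union_left.mpr ⟨hdisj i 0 hi, hdisj j 0 hj⟩)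
    rwa [iSup_union] at h
  have hIndep2 : Indep (M i ⊔ M j) (MeasurableSpace.comap Y inferInstance) μ :=
    indep_of_indep_of_le_right hIndep2' hm'le
  have hKey := aux_condIndep (hM_le i) (hM_le j) hm hIndep1 hIndep2
  rw [condIndepFun_iff_condIndep]
  exact condIndep_of_condIndep_of_le_right
    (condIndep_of_condIndep_of_le_left hKey hf) hg
end
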